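/- Let G be a simple graph on a finite vertex type V, and let G⋆ be the simple graph on Option V obtained from G by adding one new vertex (the element none) adjacent to every vertex of G (so (some u) and (some v) are adjacent in G⋆ iff u and v are adjacent in G, and none is adjacent in G⋆ to some v for every v). Then G⋆ is an underlying push clique if and only if G is an underlying oriented clique. -/

import Mathlib

/-- A directed graph `A` on `V` is an oriented graph: irreflexive and asymmetric. -/
def IsOriented {V : Type*} (A : V → V → Prop) : Prop :=
  (∀ v, ¬ A v v) ∧ ∀ u v, A u v → ¬ A v u

/-- `u` and `v` are adjacent in `A`. -/
def Adj {V : Type*} (A : V → V → Prop) (u v : V) : Prop :=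
  A u v ∨ A v u

/-- The push of `A` by the vertex set `S`: arcs with exactly one endpoint in `S`
are reversed. -/
def push {V : Type*} (S : Set V) (A : V → V → Prop) (u v : V) : Prop :=
  (Xor' (u ∈ S) (v ∈ S) ∧ A v u) ∨ (¬ Xor' (u ∈ S) (v ∈ S) ∧ A u v)

/-- `u` and `v` agree on `w`. -/
def AgreeOn {V : Type*} (A : V → V → Prop) (u v w : V) : Prop :=
  (A w u ∧ A w v) ∨ (A u w ∧ A v w)

/-- `u` and `v` disagree on `w`. -/
def DisagreeOn {V : Type*} (A : V → V → Prop) (u v w : V) : Prop :=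
  (A u w ∧ A w v) ∨ (A w u ∧ A v w)

/-- `u` and `v` are joined by a directed 2-path in `A`. -/
def TwoPath {V : Type*} (A : V → V → Prop) (u v : V) : Prop :=
  ∃ w, (A u w ∧ A w v) ∨ (A v w ∧ A w u)

/-- `A` is an oriented clique: any two distinct vertices are adjacent or joined
by a directed 2-path. -/
def IsOrientedClique {V : Type*} (A : V → V → Prop) : Prop :=
  ∀ u v, u ≠ v → Adj A u v ∨ TwoPath A u v

/-- `A` is a push clique: every push of `A` is an oriented clique. -/
def IsPushClique {V : Type*} (A : V → V → Prop) : Prop :=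
  ∀ S : Set V, IsOrientedClique (push S A)

/-- `A` is an orientation of the simple graph `G`. -/
def IsOrientationOf {V : Type*} (A : V → V → Prop) (G : SimpleGraph V) : Prop :=
  IsOriented A ∧ ∀ u v, Adj A u v ↔ G.Adj u v

/-- `G` is an underlying push clique. -/
def IsUnderlyingPushClique {V : Type*} (G : SimpleGraph V) : Prop :=
  ∃ A : V → V → Prop, IsOrientationOf A G ∧ IsPushClique A

/-- `G` is an underlying oriented clique. -/
def IsUnderlyingOrientedClique {V : Type*} (G : SimpleGraph V) : Prop :=
  ∃ A : V → V → Prop, IsOrientationOf A G ∧ IsOrientedClique A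

/- ### Auxiliary lemmas -/

lemma push_adj' {V : Type*} (S : Set V) (A : V → V → Prop) (u v : V) :
    Adj (push S A) u v ↔ Adj A u v := by
  unfold Adj push Xor'
  by_cases hu : u ∈ S <;> by_cases hv : v ∈ S <;> simp [hu, hv] <;> tauto

lemma push_oriented' {V : Type*} (S : Set V) (A : V → V → Prop) (h : IsOriented A) :
    IsOriented (push S A) := by
  obtain ⟨hi, ha⟩ := h
  constructor
  · intro v hv
    unfold push Xor' at hv
    have := hi v
    tauto
  · intro u v huv hvu
    unfold push Xor' Xor at huv hvu
    have := ha u v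
    have := ha v u
    tauto

lemma push_compl' {V : Type*} (S : Set V) (A : V → V → Prop) :
    push Sᶜ A = push S A := by
  funext u v
  simp only [push, Xor', Xor, Set.mem_compl_iff, eq_iff_iff]
  tauto

lemma push_eq_of_same {V : Type*} {S : Set V} (A : V → V → Prop) {u v : V}
    (h : u ∈ S ↔ v ∈ S) : push S A u v ↔ A u v := by
  unfold push Xor' Xor; tauto

lemma push_eq_of_diff {V : Type*} {S : Set V} (A : V → V → Prop) {u v : V}
    (h : ¬(u ∈ S ↔ v ∈ S)) : push S A u v ↔ A v u := by
  unfold push Xor' Xor; tauto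

lemma TwoPath.push_of_same {V : Type*} {S : Set V} {A : V → V → Prop} {u v : V}
    (hw : TwoPath A u v) (h : (u ∈ S) ↔ (v ∈ S)) : TwoPath (push S A) u v := by
  obtain ⟨w, hw⟩ := hw
  refine ⟨w, ?_⟩
  by_cases hws : w ∈ S <;> unfold push Xor' Xor <;> tauto

/-- Extension of an orientation by a dominating source vertex `none`. -/
def extOr {V : Type*} (A : V → V → Prop) : Option V → Option V → Prop
  | none, some _ => True
  | some u, some v => A u v
  | _, _ => False

lemma extOr_ss {V : Type*} (A : V → V → Prop) (u v : V) :
    extOr A (some u) (some v) = A u v := rfl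
lemma extOr_ns {V : Type*} (A : V → V → Prop) (v : V) :
    extOr A none (some v) = True := rfl
lemma extOr_sn {V : Type*} (A : V → V → Prop) (u : V) :
    extOr A (some u) none = False := rfl
lemma extOr_nn {V : Type*} (A : V → V → Prop) :
    extOr A (none : Option V) none = False := rfl

theorem stmt_4 {V : Type*} [Fintype V] (G : SimpleGraph V)
    (Gstar : SimpleGraph (Option V))
    (h1 : ∀ u v : V, Gstar.Adj (some u) (some v) ↔ G.Adj u v)
    (h2 : ∀ v : V, Gstar.Adj none (some v)) :
    IsUnderlyingPushClique Gstar ↔ IsUnderlyingOrientedClique G := by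
  constructor
  · -- forward direction
    rintro ⟨A, ⟨⟨hirr, hasym⟩, hadj⟩, hpush⟩
    set S : Set (Option V) := {x | A x none} with hS
    set A' := push S A with hA'def
    have hA'or : IsOriented A' := push_oriented' S A ⟨hirr, hasym⟩
    have hnone : ∀ v : V, A' none (some v) := by
      intro v
      have hadjv : Adj A none (some v) := (hadj none (some v)).mpr (h2 v)
      rcases hadjv with h | h
      · right
        constructor
        · simp only [Xor', Xor, hS, Set.mem_setOf_eq]
          have := hirr none
          have := hasym none (some v) h
          tauto
        · exact h
      · left
        constructor
        · simp only [Xor', hS, Set.mem_setOf_eq]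
          have := hirr none
          tauto
        · exact h
    have hclq := hpush S
    refine ⟨fun u v => A' (some u) (some v),
      ⟨⟨fun v => hA'or.1 (some v), fun u v h => hA'or.2 _ _ h⟩, ?_⟩, ?_⟩
    · intro u v
      show Adj A' (some u) (some v) ↔ G.Adj u v
      rw [hA'def, push_adj', hadj, h1]
    · intro u v huv
      have hkey := hclq (some u) (some v) (fun h => huv (Option.some_injective V h))
      rcases hkey with h | ⟨w, hw⟩
      · exact Or.inl h
      · right
        cases w with
        | none =>
          exfalso
          rcases hw with ⟨hu, _⟩ | ⟨hv, _⟩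
          · exact hA'or.2 _ _ (hnone u) hu
          · exact hA'or.2 _ _ (hnone v) hv
        | some w => exact ⟨w, hw⟩
  · -- backward direction
    rintro ⟨A, ⟨⟨hirr, hasym⟩, hadj⟩, hclq⟩
    refine ⟨extOr A, ⟨⟨?_, ?_⟩, ?_⟩, ?_⟩
    · rintro (_ | v) h
      · exact h
      · exact hirr v h
    · intro x y hxy hyx
      match x, y with
      | none, some v => exact hyx
      | some u, some v => exact hasym u v hxy hyx
      | some u, none => exact hxy
      | none, none => exact hxy
    · intro x y
      match x, y with
      | none, none =>
        constructor
        · rintro (h | h) <;> exact h.elim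
        · intro h
          exact absurd h (Gstar.irrefl)
      | none, some v =>
        constructor
        · intro _; exact h2 v
        · intro _; exact Or.inl trivial
      | some u, none =>
        constructor
        · intro _; exact (h2 u).symm
        · intro _; exact Or.inr trivial
      | some u, some v =>
        exact Iff.trans (hadj u v) (h1 u v).symm
    · -- push clique
      have key : ∀ S : Set (Option V), none ∉ S → IsOrientedClique (push S (extOr A)) := by
        intro S hn x y hxy
        match x, y with
        | none, none => exact absurd rfl hxy
        | none, some v =>
          left
          rw [push_adj']
          exact Or.inl trivial
        | some u, none =>
          left
          rw [push_adj']
          exact Or.inr trivial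
        | some u, some v =>
          have huv : u ≠ v := fun h => hxy (congrArg some h)
          rcases hclq u v huv with h | ⟨w, hw⟩
          · left
            rw [push_adj']
            exact h
          · right
            have htp : TwoPath (extOr A) (some u) (some v) := ⟨some w, hw⟩
            by_cases hu : some u ∈ S <;> by_cases hv : some v ∈ S
            · exact htp.push_of_same (iff_of_true hu hv)
            · refine ⟨none, Or.inl ⟨?_, ?_⟩⟩
              · exact (push_eq_of_diff (extOr A) (by tauto)).mpr trivial
              · exact (push_eq_of_same (extOr A) (by tauto)).mpr trivial
            · refine ⟨none, Or.inr ⟨?_, ?_⟩⟩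
              · exact (push_eq_of_diff (extOr A) (by tauto)).mpr trivial
              · exact (push_eq_of_same (extOr A) (by tauto)).mpr trivial
            · exact htp.push_of_same (iff_of_false hu hv)
      intro S
      by_cases hn : none ∈ S
      · rw [← push_compl']
        exact key Sᶜ (by simp [hn])
      · exact key S hn
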